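/- Let G be a finitely generated group and X ⊆ Σ^G a subshift with topological strong spatial mixing. Then X is a subshift of finite type. -/

import Mathlib

open scoped Pointwise

/-- Topological strong spatial mixing with gap `n` (word metric given by the balls
`S ^ k`): for all pairwise disjoint finite `U, V, W ⊆ G` with `d(U, V) ≥ n`, if the
patterns `u ⊔ s` (on `U ∪ W`) and `s ⊔ v` (on `W ∪ V`) of a configuration are globally
valid then so is `u ⊔ s ⊔ v` (on `U ∪ W ∪ V`). -/
def TSSM {G A : Type*} [Group G] (X : Set (G → A)) (S : Set G) (n : ℕ) : Prop :=
  ∀ U V W : Set G, U.Finite → V.Finite → W.Finite →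
    Disjoint U V → Disjoint U W → Disjoint V W →
    (∀ u ∈ U, ∀ v ∈ V, ∀ k : ℕ, k < n → u⁻¹ * v ∉ S ^ k) →
    ∀ w : G → A, (∃ p ∈ X, ∀ g ∈ U ∪ W, p g = w g) →
      (∃ p ∈ X, ∀ g ∈ W ∪ V, p g = w g) →
      ∃ p ∈ X, ∀ g ∈ U ∪ W ∪ V, p g = w g

private lemma one_mem_pow' {G : Type*} [Group G] {S : Set G} (h : (1:G) ∈ S) (n : ℕ) :
    (1:G) ∈ S ^ n := by
  induction n with
  | zero => simp
  | succ k ih => rw [pow_succ]; simpa using Set.mul_mem_mul ih h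

private lemma pow_finite' {G : Type*} [Group G] {S : Set G} (h : S.Finite) (n : ℕ) :
    (S ^ n).Finite := by
  induction n with
  | zero => simp
  | succ k ih => rw [pow_succ]; exact ih.mul h

private lemma pow_subset_pow' {G : Type*} [Group G] {S : Set G} (h : (1:G) ∈ S)
    {k n : ℕ} (hk : k ≤ n) : S ^ k ⊆ S ^ n := by
  induction n with
  | zero => simp [Nat.le_zero.mp hk]
  | succ m ih =>
    rcases Nat.lt_or_ge k (m + 1) with h1 | h1
    · intro x hx
      rw [pow_succ]
      simpa using Set.mul_mem_mul (ih (Nat.lt_succ_iff.mp h1) hx) h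
    · have : k = m + 1 := le_antisymm hk h1
      subst this; exact subset_rfl

/-- The key extension lemma: if every `S^n`-ball pattern of `x` is globally valid,
then the restriction of `x` to any finite set is globally valid. -/
private lemma tssm_extend {G A : Type*} [Group G] {S : Set G} (hS1 : (1:G) ∈ S)
    (hSinv : S⁻¹ = S) {X : Set (G → A)} {n : ℕ} (h : TSSM X S n) (x : G → A)
    (hloc : ∀ g : G, ∃ q ∈ X, ∀ b ∈ S ^ n, q (g * b) = x (g * b)) :
    ∀ F : Set G, F.Finite → ∃ p ∈ X, ∀ g ∈ F, p g = x g := by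
  intro F hF
  refine Set.Finite.induction_on F hF ?_ ?_
  · obtain ⟨q, hq, -⟩ := hloc 1
    exact ⟨q, hq, by simp⟩
  · intro a T haT hT ih
    obtain ⟨p0, hp0, hp0x⟩ := ih
    set N : Set G := {t | ∃ k < n, t⁻¹ * a ∈ S ^ k} with hN
    have hUW : (T \ N) ∪ (T ∩ N) = T := Set.diff_union_inter T N
    obtain ⟨q, hq, hqx⟩ := hloc a
    have hWV : ∃ p ∈ X, ∀ g ∈ (T ∩ N) ∪ ({a} : Set G), p g = x g := by
      refine ⟨q, hq, ?_⟩
      intro g hg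
      rcases hg with hg | hg
      · obtain ⟨k, hk, hks⟩ := hg.2
        have hmem : a⁻¹ * g ∈ S ^ n := by
          have h1 : (g⁻¹ * a)⁻¹ ∈ (S ^ k)⁻¹ := Set.inv_mem_inv.mpr hks
          rw [← inv_pow, hSinv] at h1
          have h2 : a⁻¹ * g ∈ S ^ k := by simpa using h1
          exact pow_subset_pow' hS1 (le_of_lt hk) h2
        have := hqx _ hmem
        simpa [mul_assoc] using this
      · rcases hg with rfl
        have := hqx 1 (one_mem_pow' hS1 n)
        simpa using this
    have hdist : ∀ u ∈ T \ N, ∀ v ∈ ({a} : Set G), ∀ k : ℕ, k < n → u⁻¹ * v ∉ S ^ k := by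
      rintro u hu v rfl k hk hmem
      exact hu.2 ⟨k, hk, hmem⟩
    have hdisj1 : Disjoint (T \ N) ({a} : Set G) := by
      simp only [Set.disjoint_singleton_right, Set.mem_diff, not_and]
      intro hmem; exact absurd hmem haT
    have hdisj2 : Disjoint (T \ N) (T ∩ N) := by
      apply Set.disjoint_left.mpr
      rintro t ⟨-, htN⟩ ⟨-, htN'⟩
      exact htN htN'
    have hdisj3 : Disjoint ({a} : Set G) (T ∩ N) := by
      simp only [Set.disjoint_singleton_left, Set.mem_inter_iff, not_and]
      intro hmem; exact absurd hmem haT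
    have hconc := h (T \ N) {a} (T ∩ N)
      (hT.diff : (T \ N).Finite) (Set.finite_singleton a) (hT.inter_of_left N)
      hdisj1 hdisj2 hdisj3 hdist x
      ⟨p0, hp0, by rw [hUW]; exact hp0x⟩
      hWV
    obtain ⟨p, hp, hpx⟩ := hconc
    refine ⟨p, hp, ?_⟩
    intro g hg
    apply hpx
    rcases hg with rfl | hg
    · exact Or.inr rfl
    · exact Or.inl (by rw [hUW]; exact hg)

/-- Let `G` be a finitely generated group (with finite symmetric generating set `S`
containing the identity) and `X ⊆ A^G` a subshift with topological strong spatial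
mixing. Then `X` is a subshift of finite type: it is defined by a finite set of finite
forbidden patterns. -/
theorem tssm_implies_SFT {G A : Type*} [Group G] [Finite A]
    [TopologicalSpace A] [DiscreteTopology A]
    (S : Set G) (hS1 : (1 : G) ∈ S) (hSinv : S⁻¹ = S) (hSfin : S.Finite)
    (hSgen : ∀ g : G, ∃ n : ℕ, g ∈ S ^ n)
    (X : Set (G → A)) (hclosed : IsClosed X)
    (hshift : ∀ g : G, ∀ x ∈ X, (fun h => x (g⁻¹ * h)) ∈ X)
    (htssm : ∃ n : ℕ, TSSM X S n) :
    ∃ (n : ℕ) (D : Fin n → Finset G) (p : Fin n → G → A),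
      X = {x : G → A | ∀ (g : G) (i : Fin n), ∃ h ∈ D i, x (g * h) ≠ p i h} := by
  obtain ⟨n, htssm⟩ := htssm
  classical
  -- the window: the ball of radius n
  have hBfin : (S ^ n).Finite := pow_finite' hSfin n
  set Bf : Finset G := hBfin.toFinset with hBf
  have h1B : (1 : G) ∈ Bf := hBfin.mem_toFinset.mpr (one_mem_pow' hS1 n)
  -- the forbidden patterns: ball patterns that are not globally valid
  set I : Set (↥Bf → A) :=
    {q | ¬ ∃ p ∈ X, ∀ b : ↥Bf, p (b : G) = q b} with hI
  haveI : Finite I := Subtype.finite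
  haveI : Fintype I := Fintype.ofFinite I
  set m := Fintype.card I with hm
  set e : Fin m ≃ I := (Fintype.equivFin I).symm with he
  -- extend each pattern to a full function
  set P : Fin m → G → A := fun i g =>
    if hg : g ∈ Bf then (e i : ↥Bf → A) ⟨g, hg⟩
    else (e i : ↥Bf → A) ⟨1, h1B⟩ with hP
  refine ⟨m, fun _ => Bf, P, ?_⟩
  ext x
  simp only [Set.mem_setOf_eq]
  constructor
  · -- X ⊆ SFT
    intro hx g i
    by_contra hcon
    push_neg at hcon
    -- the shift of x by g is in X and realizes the pattern e i
    have hy : (fun h => x (g * h)) ∈ X := by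
      have := hshift g⁻¹ x hx
      simpa using this
    refine (e i).2 ⟨fun h => x (g * h), hy, ?_⟩
    rintro ⟨b, hb⟩
    have := hcon b hb
    simp only [hP, dif_pos hb] at this
    exact this
  · -- SFT ⊆ X
    intro hx
    -- local validity of all ball patterns
    have hloc : ∀ g : G, ∃ q ∈ X, ∀ b ∈ S ^ n, q (g * b) = x (g * b) := by
      intro g
      set r : ↥Bf → A := fun b => x (g * (b : G)) with hr
      have hrI : r ∉ I := by
        intro hmem
        obtain ⟨b, hb, hne⟩ := hx g (e.symm ⟨r, hmem⟩)
        apply hne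
        simp only [hP, dif_pos hb, Equiv.apply_symm_apply]
        rfl
      simp only [hI, Set.mem_setOf_eq, not_not] at hrI
      obtain ⟨p, hp, hpr⟩ := hrI
      refine ⟨fun t => p (g⁻¹ * t), hshift g p hp, ?_⟩
      intro b hb
      have hb' : b ∈ Bf := hBfin.mem_toFinset.mpr hb
      have := hpr ⟨b, hb'⟩
      simpa [hr] using this
    -- every finite restriction of x is globally valid
    have hfin := tssm_extend hS1 hSinv htssm x hloc
    -- conclude by closedness
    by_contra hxX
    have hopen : IsOpen Xᶜ := hclosed.isOpen_compl
    rw [isOpen_pi_iff] at hopen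
    obtain ⟨F, u, hu, hsub⟩ := hopen x hxX
    obtain ⟨p, hp, hpx⟩ := hfin (F : Set G) F.finite_toSet
    refine (hsub ?_).elim hp
    intro a ha
    rw [hpx a ha]
    exact (hu a ha).2
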